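/- Fix P₀ > 0 and P_LO > 0, and suppose the quantity P_c* = a₃₄P_LO(X₀ + √(X₀² + 4X₂²))/(4a₁₂a₂₃P₀) − a₁₂P₀/a₂₃ is strictly positive. Then the DIOD thermal-noise objective g(P_c) = P₁(P_c)²·κ₁(P_c)², viewed as a function of the coupling power P_c on (0, ∞), has derivative zero at P_c = P_c*; i.e., P_c* is a stationary point of P₁²κ₁². -/

import Mathlib

open Set

/-- `X₁ = 2a₁₂²P₀² + 2a₁₂P₀(a₃₄P_LO + a₂₃P_c) + γ₂²a₃₄P_LO`. -/
noncomputable def X1fun (a12 a23 a34 γ2 P0 Pc PLO : ℝ) : ℝ :=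
  2 * a12 ^ 2 * P0 ^ 2 + 2 * a12 * P0 * (a34 * PLO + a23 * Pc) + γ2 ^ 2 * a34 * PLO

/-- Transmitted probe power `P₁ = P₀·exp(−X₀a₃₄P_LO/X₁)` at zero detuning. -/
noncomputable def P1fun (a12 a23 a34 γ2 X0 P0 Pc PLO : ℝ) : ℝ :=
  P0 * Real.exp (-(X0 * a34 * PLO) / X1fun a12 a23 a34 γ2 P0 Pc PLO)

/-- RF-to-optical slope `κ₁ = C₀·√(a₃₄P_LO)·a₁₂P₀·(a₂₃P_c + a₁₂P₀)/X₁²`. -/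
noncomputable def κ1fun (a12 a23 a34 γ2 C0 P0 Pc PLO : ℝ) : ℝ :=
  C0 * Real.sqrt (a34 * PLO) * (a12 * P0) * (a23 * Pc + a12 * P0)
    / (X1fun a12 a23 a34 γ2 P0 Pc PLO) ^ 2

/-- `X₂ = 2a₁₂P₀ + γ₂²`. -/
noncomputable def X2fun (a12 γ2 P0 : ℝ) : ℝ := 2 * a12 * P0 + γ2 ^ 2


theorem diod_thermal_noise_stationary_coupling_power
    (a12 a23 a34 γ2 X0 C0 : ℝ)
    (ha12 : 0 < a12) (ha23 : 0 < a23) (ha34 : 0 < a34) (hγ2 : 0 < γ2)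
    (hX0 : 0 < X0) (hC0 : 0 < C0)
    (P0 PLO : ℝ) (hP0 : 0 < P0) (hPLO : 0 < PLO)
    (Pcstar : ℝ)
    (hPcstar : Pcstar =
      a34 * PLO * (X0 + Real.sqrt (X0 ^ 2 + 4 * (X2fun a12 γ2 P0) ^ 2))
        / (4 * a12 * a23 * P0) - a12 * P0 / a23)
    (hpos : 0 < Pcstar) :
    HasDerivAt
      (fun Pc => (P1fun a12 a23 a34 γ2 X0 P0 Pc PLO) ^ 2
        * (κ1fun a12 a23 a34 γ2 C0 P0 Pc PLO) ^ 2)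
      0 Pcstar := by
  set S := Real.sqrt (X0 ^ 2 + 4 * (X2fun a12 γ2 P0) ^ 2) with hSdef
  have hS2 : S ^ 2 = X0 ^ 2 + 4 * (X2fun a12 γ2 P0) ^ 2 := by
    rw [hSdef]; exact Real.sq_sqrt (by positivity)
  set u := X1fun a12 a23 a34 γ2 P0 Pcstar PLO with hudef
  have hupos : 0 < u := by
    rw [hudef]; unfold X1fun; positivity
  have hune : u ≠ 0 := ne_of_gt hupos
  -- value of u at Pcstar
  have hu_eq : u = a34 * PLO * (2 * a12 * P0 + γ2 ^ 2) + X0 * a34 * PLO / 2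
      + a34 * PLO * S / 2 := by
    rw [hudef]; unfold X1fun
    rw [hPcstar]
    field_simp
    ring
  -- quadratic identity satisfied by u
  have hquad : u ^ 2 = (X0 * a34 * PLO + 2 * (a34 * PLO * (2 * a12 * P0 + γ2 ^ 2))) * u
      - (X0 * a34 * PLO) * (a34 * PLO * (2 * a12 * P0 + γ2 ^ 2)) := by
    rw [hu_eq]
    unfold X2fun at hS2
    linear_combination ((a34 * PLO) ^ 2 / 4) * hS2
  -- derivative of X1 in Pc
  have hu' : HasDerivAt (fun Pc : ℝ => X1fun a12 a23 a34 γ2 P0 Pc PLO)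
      (2 * a12 * P0 * a23) Pcstar := by
    have h : (fun Pc : ℝ => X1fun a12 a23 a34 γ2 P0 Pc PLO)
        = fun Pc => (2 * a12 * P0 * a23) * Pc
          + (2 * a12 ^ 2 * P0 ^ 2 + 2 * a12 * P0 * (a34 * PLO) + γ2 ^ 2 * a34 * PLO) := by
      funext Pc; unfold X1fun; ring
    rw [h]
    simpa using ((hasDerivAt_id Pcstar).const_mul (2 * a12 * P0 * a23)).add_const (2 * a12 ^ 2 * P0 ^ 2 + 2 * a12 * P0 * (a34 * PLO) + γ2 ^ 2 * a34 * PLO)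
  have hinner : HasDerivAt
      (fun Pc : ℝ => -(X0 * a34 * PLO) / X1fun a12 a23 a34 γ2 P0 Pc PLO)
      ((0 * u - (-(X0 * a34 * PLO)) * (2 * a12 * P0 * a23)) / u ^ 2) Pcstar := by
    simpa [hudef] using (hasDerivAt_const Pcstar (-(X0 * a34 * PLO))).fun_div hu' (by rw [← hudef]; exact hune)
  have hP1 : HasDerivAt (fun Pc : ℝ => P1fun a12 a23 a34 γ2 X0 P0 Pc PLO)
      (P0 * (Real.exp (-(X0 * a34 * PLO) / u)
        * ((0 * u - (-(X0 * a34 * PLO)) * (2 * a12 * P0 * a23)) / u ^ 2))) Pcstar := by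
    unfold P1fun
    exact (hinner.exp).const_mul P0
  have hnum : HasDerivAt
      (fun Pc : ℝ => C0 * Real.sqrt (a34 * PLO) * (a12 * P0) * (a23 * Pc + a12 * P0))
      (C0 * Real.sqrt (a34 * PLO) * (a12 * P0) * a23) Pcstar := by
    have h2 : HasDerivAt (fun Pc : ℝ => a23 * Pc + a12 * P0) a23 Pcstar := by
      simpa using ((hasDerivAt_id Pcstar).const_mul a23).add_const (a12 * P0)
    simpa [mul_comm, mul_assoc] using h2.const_mul (C0 * Real.sqrt (a34 * PLO) * (a12 * P0))
  have hden : HasDerivAt (fun Pc : ℝ => (X1fun a12 a23 a34 γ2 P0 Pc PLO) ^ 2)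
      (2 * u ^ 1 * (2 * a12 * P0 * a23)) Pcstar := by
    simpa [hudef] using hu'.fun_pow 2
  have hκ : HasDerivAt (fun Pc : ℝ => κ1fun a12 a23 a34 γ2 C0 P0 Pc PLO)
      ((C0 * Real.sqrt (a34 * PLO) * (a12 * P0) * a23 * u ^ 2
        - C0 * Real.sqrt (a34 * PLO) * (a12 * P0) * (a23 * Pcstar + a12 * P0)
          * (2 * u ^ 1 * (2 * a12 * P0 * a23))) / (u ^ 2) ^ 2) Pcstar := by
    unfold κ1fun
    simpa [hudef] using hnum.fun_div hden (by rw [← hudef] at *; positivity)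
  have hg := (hP1.fun_pow 2).fun_mul (hκ.fun_pow 2)
  convert hg using 1
  -- now show 0 = messy derivative
  · rfl
  · rfl
  rw [P1fun, κ1fun, ← hudef]
  set e := Real.exp (-(X0 * a34 * PLO) / u) with hedef
  have hepos : 0 < e := Real.exp_pos _
  set s := Real.sqrt (a34 * PLO) with hsdef
  have hs2 : s ^ 2 = a34 * PLO := by rw [hsdef]; exact Real.sq_sqrt (by positivity)
  have hq : 2 * a12 * P0 * (a23 * Pcstar + a12 * P0)
      = u - a34 * PLO * (2 * a12 * P0 + γ2 ^ 2) := by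
    rw [hudef]; unfold X1fun; ring
  field_simp
  linear_combination
    (-(2 * P0 ^ 2 * e ^ 2 * (C0 * s * (a12 * P0)) ^ 2 * (a23 * Pcstar + a12 * P0) * a23
        * (X0 * a34 * PLO - 2 * u))) * hq
    + (2 * P0 ^ 2 * e ^ 2 * (C0 * s * (a12 * P0)) ^ 2 * (a23 * Pcstar + a12 * P0) * a23) * hquad
    + ((u * u⁻¹ + 1) * (u * (8 * P0 ^ 5 * e ^ 2 * C0 ^ 2 * s ^ 2 * a12 ^ 3 * a23 ^ 3 * Pcstar ^ 2 + 16 * P0 ^ 6 * e ^ 2 * C0 ^ 2 * s ^ 2 * a12 ^ 4 * a23 ^ 2 * Pcstar + 8 * P0 ^ 7 * e ^ 2 * C0 ^ 2 * s ^ 2 * a12 ^ 5 * a23) - u ^ 2 * (2 * P0 ^ 4 * e ^ 2 * C0 ^ 2 * s ^ 2 * a12 ^ 2 * a23 ^ 2 * Pcstar + 2 * P0 ^ 5 * e ^ 2 * C0 ^ 2 * s ^ 2 * a12 ^ 3 * a23))) * (mul_inv_cancel₀ hune)
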